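/- Let W be a finite group, P a W-lattice, λ: P → Z/nZ a surjective W-module homomorphism with W acting trivially on Z/nZ. If a subgroup S ⊆ (Z/nZ)^m contains an element of order n, then the W-module P^m_S := (λ^m)⁻¹(S) ⊆ P^m (with diagonal W-action) has a direct summand isomorphic to P. -/

import Mathlib

/-- The action of `G` on an invariant additive subgroup. -/
def subAction {G M : Type} [Group G] [AddCommGroup M] [DistribMulAction G M]
    (S : AddSubgroup M) (h : ∀ (g : G) (x : M), x ∈ S → g • x ∈ S) :
    DistribMulAction G S where
  smul g x := ⟨g • (x : M), h g x x.2⟩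
  one_smul x := Subtype.ext (one_smul G (x : M))
  mul_smul g g' x := Subtype.ext (mul_smul g g' (x : M))
  smul_zero g := Subtype.ext (smul_zero g)
  smul_add g x y := Subtype.ext (smul_add g (x : M) (y : M))

section Preimage

variable {P : Type} [AddCommGroup P] {n m : ℕ}

/-- The componentwise application `λ^m : P^m → (ℤ/nℤ)^m` of `λ : P → ℤ/nℤ`. -/
def piHom (lam : P →+ ZMod n) (m : ℕ) : (Fin m → P) →+ (Fin m → ZMod n) where
  toFun f := fun i => lam (f i)
  map_zero' := by funext i; simp
  map_add' f g := by funext i; simp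

/-- `P^m_S`, the preimage of `S ⊆ (ℤ/nℤ)^m` under `λ^m`. -/
def preSub (lam : P →+ ZMod n) (m : ℕ) (S : AddSubgroup (Fin m → ZMod n)) :
    AddSubgroup (Fin m → P) :=
  S.comap (piHom lam m)

end Preimage



open Finset in
lemma bezout_finset {ι : Type} [DecidableEq ι] (s : Finset ι) (f : ι → ℤ) :
    ∃ a : ι → ℤ, ∑ i ∈ s, a i * f i = s.gcd f := by
  induction s using Finset.induction_on with
  | empty => exact ⟨0, by simp⟩
  | @insert i s hi ih =>
    obtain ⟨a, ha⟩ := ih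
    refine ⟨fun j => if j = i then Int.gcdA (f i) (s.gcd f)
            else Int.gcdB (f i) (s.gcd f) * a j, ?_⟩
    rw [Finset.sum_insert hi, Finset.gcd_insert]
    have h2 : ∑ j ∈ s, (if j = i then Int.gcdA (f i) (s.gcd f)
        else Int.gcdB (f i) (s.gcd f) * a j) * f j
        = Int.gcdB (f i) (s.gcd f) * ∑ j ∈ s, a j * f j := by
      rw [Finset.mul_sum]
      refine Finset.sum_congr rfl fun j hj => ?_
      rw [if_neg (by rintro rfl; exact hi hj), mul_assoc]
    beta_reduce
    rw [if_pos rfl, h2, ha]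
    have h3 := Int.gcd_eq_gcd_ab (f i) (s.gcd f)
    have hg : (gcd (f i) (s.gcd f) : ℤ) = (Int.gcd (f i) (s.gcd f) : ℤ) := by
      rw [Int.coe_gcd]
    rw [hg, h3]
    ring

lemma zsmul_sum' {P : Type} [AddCommGroup P] {ι : Type} (s : Finset ι)
    (f : ι → ℤ) (p : P) : (∑ i ∈ s, f i) • p = ∑ i ∈ s, f i • p := by
  classical
  induction s using Finset.induction_on with
  | empty => simp
  | @insert i s hi ih =>
    rw [Finset.sum_insert hi, Finset.sum_insert hi, add_zsmul, ih]

lemma exists_primitive {n m : ℕ} (hn : 1 ≤ n) (hm : 1 ≤ m)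
    (S : AddSubgroup (Fin m → ZMod n))
    (hord : ∃ x ∈ S, addOrderOf x = n) :
    ∃ d a : Fin m → ℤ, (∑ i, a i * d i) = 1 ∧
      (fun i => ((d i : ZMod n))) ∈ S := by
  haveI : NeZero n := ⟨by omega⟩
  obtain ⟨x, hxS, hx⟩ := hord
  set c : Fin m → ℤ := fun i => ((x i).val : ℤ) with hc
  set g₀ : ℤ := Finset.univ.gcd c with hg₀
  -- coprimality of g₀ and n
  have hcop : Int.gcd g₀ (n : ℤ) = 1 := by
    set g : ℕ := Int.gcd g₀ (n : ℤ) with hg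
    have hgn : g ∣ n := by
      have := Int.gcd_dvd_right (a := g₀) (b := (n : ℤ))
      exact_mod_cast this
    have hgpos : 0 < g := by
      rcases Nat.eq_zero_or_pos g with h | h
      · exfalso
        have := Int.gcd_eq_zero_iff.mp h
        omega
      · exact h
    have hsm : (n / g) • x = 0 := by
      funext i
      have hxi : (((x i).val : ℕ) : ZMod n) = x i := ZMod.natCast_rightInverse (x i)
      have hgv : g ∣ (x i).val := by
        have h1 : (g : ℤ) ∣ g₀ := Int.gcd_dvd_left _ _
        have h2 : g₀ ∣ (((x i).val : ℕ) : ℤ) := Finset.gcd_dvd (Finset.mem_univ i)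
        have h3 : (g : ℤ) ∣ (((x i).val : ℕ) : ℤ) := h1.trans h2
        exact_mod_cast h3
      have hdvd : n ∣ n / g * (x i).val := by
        obtain ⟨k, hk⟩ := hgv
        calc n = n / g * g := (Nat.div_mul_cancel hgn).symm
        _ ∣ n / g * (x i).val := by rw [hk]; exact ⟨k, by ring⟩
      show (n / g) • x i = 0
      rw [← hxi, nsmul_eq_mul, ← Nat.cast_mul, ZMod.natCast_eq_zero_iff]
      exact hdvd
    have hdvd2 : n ∣ n / g := by
      have := addOrderOf_dvd_of_nsmul_eq_zero hsm
      rwa [hx] at this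
    have h1 : 1 ≤ n / g := Nat.one_le_div_iff hgpos |>.mpr (Nat.le_of_dvd (by omega) hgn)
    have h2 : n / g ≤ n := Nat.div_le_self n g
    have h3 : n / g = n := Nat.dvd_antisymm (Nat.div_dvd_of_dvd hgn) hdvd2
    have h4 : n / g * g = n := Nat.div_mul_cancel hgn
    rw [h3] at h4
    have : n * g = n * 1 := by omega
    exact Nat.eq_of_mul_eq_mul_left (by omega) this
  by_cases h0 : g₀ = 0
  · -- all components zero, so x = 0 and n = 1
    have hall : ∀ i, x i = 0 := by
      intro i
      have h5 : (((x i).val : ℕ) : ℤ) = 0 := (Finset.gcd_eq_zero_iff.mp h0) i (Finset.mem_univ i)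
      have hv : (x i).val = 0 := by exact_mod_cast h5
      exact (ZMod.val_eq_zero (x i)).mp hv
    have hx0 : x = 0 := funext hall
    have hn1 : n = 1 := by rw [← hx, hx0, addOrderOf_zero]
    subst hn1
    refine ⟨fun j => if j = ⟨0, hm⟩ then 1 else 0,
           fun j => if j = ⟨0, hm⟩ then 1 else 0, ?_, ?_⟩
    · simp [Finset.sum_ite_eq', mul_ite]
    · have : (fun i => (((if i = (⟨0, hm⟩ : Fin m) then (1:ℤ) else 0) : ℤ) : ZMod 1))
          = (0 : Fin m → ZMod 1) := funext fun i => Subsingleton.elim _ _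
      rw [this]
      exact S.zero_mem
  · set e : Fin m → ℤ := fun i => c i / g₀ with he
    have hex : ∃ i, c i ≠ 0 := by
      by_contra hcon
      push_neg at hcon
      exact h0 (Finset.gcd_eq_zero_iff.mpr (fun i _ => hcon i))
    obtain ⟨i₀, hi₀⟩ := hex
    have hge : Finset.univ.gcd e = 1 :=
      Finset.gcd_div_eq_one (Finset.mem_univ i₀) hi₀
    obtain ⟨a, ha⟩ := bezout_finset Finset.univ e
    rw [hge] at ha
    refine ⟨e, a, ha, ?_⟩
    obtain ⟨u, v, huv⟩ := Int.isCoprime_iff_gcd_eq_one.mpr hcop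
    have hmem : (fun i => ((e i : ZMod n))) = u • x := by
      funext i
      have hcx : ((c i : ℤ) : ZMod n) = x i := by
        have : (((x i).val : ℕ) : ZMod n) = x i := ZMod.natCast_rightInverse (x i)
        rw [hc]
        push_cast
        exact this
      have hce : c i = g₀ * e i := (Int.mul_ediv_cancel'
        (Finset.gcd_dvd (Finset.mem_univ i))).symm
      have key : e i = u * c i + (v * e i) * (n : ℤ) := by
        rw [hce]; linear_combination (-(e i)) * huv
      show ((e i : ℤ) : ZMod n) = u • x i
      rw [key]
      push_cast
      rw [ZMod.natCast_self]
      rw [zsmul_eq_mul, ← hcx]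
      ring
    rw [hmem]
    exact AddSubgroup.zsmul_mem S hxS u


/-- Let `W` be a finite group, `P` a `W`-lattice,
`λ : P → ℤ/nℤ` a surjective `W`-map (trivial action on `ℤ/nℤ`). If a subgroup
`S ⊆ (ℤ/nℤ)^m` contains an element of order `n`, then the `W`-module
`P^m_S = (λ^m)⁻¹(S)` (diagonal action) has a direct summand isomorphic to `P`. -/
theorem preimage_has_summand_P (W : Type) [Group W] [Finite W]
    (n m : ℕ) (hn : 1 ≤ n) (hm : 1 ≤ m)
    (P : Type) [AddCommGroup P] [DistribMulAction W P]
    [Module.Free ℤ P] [Module.Finite ℤ P]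
    (lam : P →+ ZMod n) (hsurj : Function.Surjective lam)
    (heq : ∀ (w : W) (x : P), lam (w • x) = lam x)
    (S : AddSubgroup (Fin m → ZMod n))
    (hord : ∃ x ∈ S, addOrderOf x = n) :
    ∃ h1 : ∀ (w : W) (x : Fin m → P),
        x ∈ preSub lam m S → w • x ∈ preSub lam m S,
      letI := subAction _ h1
      ∃ (f : P →+ ↥(preSub lam m S)) (r : ↥(preSub lam m S) →+ P),
        (∀ (w : W) (x : P), f (w • x) = w • f x) ∧
        (∀ (w : W) (x : ↥(preSub lam m S)), r (w • x) = w • r x) ∧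
        r.comp f = AddMonoidHom.id P := by
  haveI : NeZero n := ⟨by omega⟩
  obtain ⟨d, a, hsum, hdS⟩ := exists_primitive hn hm S hord
  have h1 : ∀ (w : W) (x : Fin m → P),
      x ∈ preSub lam m S → w • x ∈ preSub lam m S := by
    intro w y hy
    have hkey : piHom lam m (w • y) = piHom lam m y := by
      funext i
      show lam ((w • y) i) = lam (y i)
      rw [Pi.smul_apply]
      exact heq w (y i)
    show piHom lam m (w • y) ∈ S
    rw [hkey]
    exact hy
  refine ⟨h1, ?_⟩
  letI := subAction _ h1
  have hmem : ∀ p : P, (fun i => d i • p) ∈ preSub lam m S := by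
    intro p
    show (fun i => lam (d i • p)) ∈ S
    have hk : (fun i => lam (d i • p))
        = ((lam p).val : ℕ) • (fun i => ((d i : ZMod n))) := by
      funext i
      rw [Pi.smul_apply, AddMonoidHom.map_zsmul, zsmul_eq_mul, nsmul_eq_mul]
      rw [ZMod.natCast_rightInverse (lam p)]
      ring
    rw [hk]
    exact AddSubgroup.nsmul_mem S hdS _
  let f : P →+ ↥(preSub lam m S) :=
    { toFun := fun p => ⟨fun i => d i • p, hmem p⟩,
      map_zero' := Subtype.ext (funext fun i => smul_zero _),
      map_add' := fun p q => Subtype.ext (funext fun i => smul_add (d i) p q) }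
  let r : ↥(preSub lam m S) →+ P :=
    { toFun := fun y => ∑ i, a i • (y : Fin m → P) i,
      map_zero' := by
        show ∑ i : Fin m, a i • ((0 : preSub lam m S) : Fin m → P) i = 0
        simp,
      map_add' := by
        intro y z
        show ∑ i : Fin m, a i • ((y + z : preSub lam m S) : Fin m → P) i = _
        rw [← Finset.sum_add_distrib]
        refine Finset.sum_congr rfl fun i _ => ?_
        have : ((y + z : preSub lam m S) : Fin m → P) i
            = (y : Fin m → P) i + (z : Fin m → P) i := rfl
        rw [this, smul_add] }
  refine ⟨f, r, ?_, ?_, ?_⟩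
  · intro w p
    apply Subtype.ext
    show (fun i => d i • (w • p)) = w • (fun i => d i • p)
    funext i
    rw [Pi.smul_apply]
    exact ((DistribMulAction.toAddMonoidHom P w).map_zsmul (d i) p).symm
  · intro w y
    show ∑ i, a i • ((w • y : preSub lam m S) : Fin m → P) i
        = w • ∑ i, a i • (y : Fin m → P) i
    have hcoe : ∀ i, ((w • y : preSub lam m S) : Fin m → P) i = w • (y : Fin m → P) i :=
      fun i => rfl
    rw [show w • ∑ i : Fin m, a i • (y : Fin m → P) i
        = ∑ i : Fin m, w • (a i • (y : Fin m → P) i) from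
      map_sum (DistribMulAction.toAddMonoidHom P w) _ _]
    refine Finset.sum_congr rfl fun i _ => ?_
    rw [hcoe i]
    exact ((DistribMulAction.toAddMonoidHom P w).map_zsmul (a i) ((y : Fin m → P) i)).symm
  · ext p
    show ∑ i, a i • (d i • p) = p
    have : ∀ i, a i • (d i • p) = (a i * d i) • p := fun i => (mul_zsmul p _ _).symm
    simp only [this]
    rw [← zsmul_sum', hsum, one_zsmul]
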